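/- arXiv:1410.2640 — 2 statements merged into one kernel-verified Lean document; each statement's English description precedes it below -/
import Mathlib

section
/- Let m ≥ 2 be an integer and set d = 2m. If for every number of rows n there exists a deterministic (1/8, M)-Itemset-Frequency-Indicator sketching scheme for pairs on d items and n rows, then 2^M ≥ m! (equivalently, M ≥ log₂(m!)). -/
/-- The frequency of an itemset `T` in a database `D` with `n` rows over `d` items:
the fraction of rows in which every item of `T` occurs. -/
noncomputable def freq {n d : ℕ} (D : Fin n → Fin d → Bool) (T : Finset (Fin d)) : ℝ :=
  ((Finset.univ.filter (fun i : Fin n => ∀ j ∈ T, D i j = true)).card : ℝ) / n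

/-- A deterministic `(ε, M)`-Itemset-Frequency-Indicator sketching scheme for pairs on `d`
items and `n` rows: an encoder into `M`-bit sketches and a decoder answering every pairwise
query correctly. -/
def DetIFIScheme (d n M : ℕ) (ε : ℝ) : Prop :=
  ∃ (Enc : (Fin n → Fin d → Bool) → Fin (2 ^ M))
    (Dec : Fin (2 ^ M) → Fin d → Fin d → Bool),
    ∀ D : Fin n → Fin d → Bool, ∀ a b : Fin d, a ≠ b →
      (freq D {a, b} ≥ ε → Dec (Enc D) a b = true) ∧
      (freq D {a, b} ≤ ε / 2 → Dec (Enc D) a b = false)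

def itemL (m : ℕ) (a : Fin m) : Fin (2 * m) :=
  ⟨a, by have := a.isLt; omega⟩

def itemR (m : ℕ) (c : Fin m) : Fin (2 * m) :=
  ⟨m + c, by have := c.isLt; omega⟩

/-- The database associated to a permutation: rows are base-8 digit strings; item `a < m`
is present iff digit `a` is 0, item `m + c` is present iff digit `π⁻¹ c` is 0. -/
def DB (m : ℕ) (π : Equiv.Perm (Fin m)) (i : Fin (8 ^ m)) (j : Fin (2 * m)) : Bool :=
  if h : (j : ℕ) < m then decide ((finFunctionFinEquiv.symm i) ⟨j, h⟩ = 0)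
  else decide ((finFunctionFinEquiv.symm i)
      (π.symm ⟨(j : ℕ) - m, by have := j.isLt; omega⟩) = 0)

lemma card_pair_filter (m : ℕ) (a b : Fin m) :
    (Finset.univ.filter fun f : Fin m → Fin 8 => f a = 0 ∧ f b = 0).card
      = if a = b then 8 ^ (m - 1) else 8 ^ (m - 2) := by
  have hfe : (Finset.univ.filter fun f : Fin m → Fin 8 => f a = 0 ∧ f b = 0)
      = Fintype.piFinset (fun i => if i = a ∨ i = b then ({0} : Finset (Fin 8)) else Finset.univ) := by
    ext f
    simp only [Finset.mem_filter, Finset.mem_univ, true_and, Fintype.mem_piFinset]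
    constructor
    · rintro ⟨h1, h2⟩ i
      by_cases hi : i = a ∨ i = b
      · rw [if_pos hi]; rcases hi with rfl | rfl <;> simp [h1, h2]
      · rw [if_neg hi]; simp
    · intro hf
      constructor
      · have := hf a; rw [if_pos (Or.inl rfl)] at this; simpa using this
      · have := hf b; rw [if_pos (Or.inr rfl)] at this; simpa using this
  rw [hfe, Fintype.card_piFinset]
  have : ∀ i : Fin m, (if i = a ∨ i = b then ({0} : Finset (Fin 8)) else Finset.univ).card
      = if i = a ∨ i = b then 1 else 8 := by
    intro i; split <;> simp
  rw [Finset.prod_congr rfl (fun i _ => this i)]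
  rw [Finset.prod_ite]
  simp only [Finset.prod_const, one_pow, one_mul]
  have hflt : (Finset.univ.filter fun i : Fin m => ¬(i = a ∨ i = b))
      = Finset.univ \ ({a, b} : Finset (Fin m)) := by
    ext i; simp [not_or]
  rw [hflt, Finset.card_sdiff_of_subset (Finset.subset_univ _)]
  by_cases hab : a = b
  · subst hab; simp [if_pos rfl]
  · rw [if_neg hab, Finset.card_insert_of_notMem (by simpa using hab), Finset.card_singleton]
    simp

lemma freq_DB (m : ℕ) (hm : 2 ≤ m) (π : Equiv.Perm (Fin m)) (a c : Fin m) :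
    freq (DB m π) {itemL m a, itemR m c} = if π a = c then (1 : ℝ) / 8 else 1 / 64 := by
  have hx : ∀ i : Fin (8 ^ m), DB m π i (itemL m a) = decide ((finFunctionFinEquiv.symm i) a = 0) := by
    intro i
    simp only [DB]
    rw [dif_pos (show ((itemL m a : Fin (2 * m)) : ℕ) < m from a.isLt)]
    rfl
  have hy : ∀ i : Fin (8 ^ m), DB m π i (itemR m c)
      = decide ((finFunctionFinEquiv.symm i) (π.symm c) = 0) := by
    intro i
    simp only [DB]
    rw [dif_neg (show ¬((itemR m c : Fin (2 * m)) : ℕ) < m by simp [itemR])]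
    simp only [itemR]
    congr 2
    ext
    simp
  have hcond : ∀ i : Fin (8 ^ m),
      (∀ j ∈ ({itemL m a, itemR m c} : Finset (Fin (2 * m))), DB m π i j = true)
      ↔ ((finFunctionFinEquiv.symm i) a = 0 ∧ (finFunctionFinEquiv.symm i) (π.symm c) = 0) := by
    intro i
    simp only [Finset.mem_insert, Finset.mem_singleton, forall_eq_or_imp, forall_eq, hx i, hy i,
      decide_eq_true_eq]
  have hcardeq : (Finset.univ.filter fun i : Fin (8 ^ m) =>
        ∀ j ∈ ({itemL m a, itemR m c} : Finset (Fin (2 * m))), DB m π i j = true).card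
      = (Finset.univ.filter fun f : Fin m → Fin 8 => f a = 0 ∧ f (π.symm c) = 0).card := by
    rw [← Fintype.card_subtype, ← Fintype.card_subtype]
    exact Fintype.card_congr
      (Equiv.subtypeEquiv (p := fun i : Fin (8 ^ m) =>
          ∀ j ∈ ({itemL m a, itemR m c} : Finset (Fin (2 * m))), DB m π i j = true)
        (q := fun f : Fin m → Fin 8 => f a = 0 ∧ f (π.symm c) = 0)
        ((finFunctionFinEquiv (m := 8) (n := m)).symm) (fun i => hcond i))
  unfold freq
  rw [hcardeq, card_pair_filter]
  have hmatch : (a = π.symm c) ↔ (π a = c) := by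
    constructor
    · rintro rfl; simp
    · rintro rfl; simp
  by_cases hpc : π a = c
  · rw [if_pos (hmatch.mpr hpc), if_pos hpc]
    have e1 : ((8 ^ (m - 1) : ℕ) : ℝ) = 8 ^ (m - 1) := by push_cast; ring
    have e2 : ((8 ^ m : ℕ) : ℝ) = 8 ^ (m - 1) * 8 := by
      have : m = (m - 1) + 1 := (Nat.sub_add_cancel (le_trans one_le_two hm)).symm
      rw [this, pow_succ]
      push_cast
      ring
    rw [e1, e2, div_eq_div_iff (by positivity) (by norm_num)]
    ring
  · rw [if_neg (fun hh => hpc (hmatch.mp hh)), if_neg hpc]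
    have e1 : ((8 ^ (m - 2) : ℕ) : ℝ) = 8 ^ (m - 2) := by push_cast; ring
    have e2 : ((8 ^ m : ℕ) : ℝ) = 8 ^ (m - 2) * 64 := by
      have : m = (m - 2) + 2 := (Nat.sub_add_cancel hm).symm
      rw [this, pow_add]
      push_cast
      ring
    rw [e1, e2, div_eq_div_iff (by positivity) (by norm_num)]
    ring

theorem det_itemset_sketch_counting (m M : ℕ) (hm : 2 ≤ m)
    (h : ∀ n : ℕ, DetIFIScheme (2 * m) n M (1 / 8)) :
    Nat.factorial m ≤ 2 ^ M := by
  obtain ⟨Enc, Dec, hED⟩ := h (8 ^ m)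
  have hinj : Function.Injective (fun π : Equiv.Perm (Fin m) => Enc (DB m π)) := by
    intro π σ hEq
    by_contra hne
    obtain ⟨a, ha⟩ : ∃ a, π a ≠ σ a := by
      by_contra h'
      push_neg at h'
      exact hne (Equiv.ext h')
    have hxy : itemL m a ≠ itemR m (π a) := by
      simp only [itemL, itemR, Ne, Fin.mk.injEq]
      have := a.isLt; omega
    have h1 := (hED (DB m π) (itemL m a) (itemR m (π a)) hxy).1
    have h2 := (hED (DB m σ) (itemL m a) (itemR m (π a)) hxy).2
    rw [freq_DB m hm π a (π a), if_pos rfl] at h1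
    rw [freq_DB m hm σ a (π a), if_neg (fun hh => ha hh.symm)] at h2
    have hb1 : Dec (Enc (DB m π)) (itemL m a) (itemR m (π a)) = true := h1 (le_refl _)
    have hb2 : Dec (Enc (DB m σ)) (itemL m a) (itemR m (π a)) = false := h2 (by norm_num)
    have hEq' : Enc (DB m π) = Enc (DB m σ) := hEq
    rw [hEq'] at hb1
    rw [hb1] at hb2
    exact Bool.noConfusion hb2
  calc Nat.factorial m = Fintype.card (Equiv.Perm (Fin m)) := by
        rw [Fintype.card_perm, Fintype.card_fin]
    _ ≤ Fintype.card (Fin (2 ^ M)) := Fintype.card_le_of_injective _ hinj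
    _ = 2 ^ M := Fintype.card_fin _
end

section
/- There is a constant C > 0 with the following property. For all integers m ≥ 2 and r ≥ 1, setting d = 2·m·r, there exists n ≤ C · r · log d such that for every family (Π_{k,l})_{k,l ∈ Fin r} of permutations of Fin m there is a database D : Fin n → Fin d → Bool, each of whose rows equals v_{k,S} for some k ∈ Fin r and S ⊆ Fin m, satisfying: for all k, l ∈ Fin r and i, j : Fin m, f_{T_{k,l}(i,j)}(D) = 0 if j = Π_{k,l}(i), and f_{T_{k,l}(i,j)}(D) ≥ 1/(8r) if j ≠ Π_{k,l}(i). In particular, the map from families (Π_{k,l})_{k,l} to such databases is injective. -/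
open Finset

lemma aux_card_filter_equiv {α β : Type*} [Fintype α] [Fintype β] (e : α ≃ β)
    (P : β → Prop) [DecidablePred P] :
    (univ.filter fun a => P (e a)).card = (univ.filter P).card := by
  apply Finset.card_bij (fun a _ => e a)
  · intro a ha; simp only [mem_filter, mem_univ, true_and] at ha ⊢; exact ha
  · intro a _ b _ h; exact e.injective h
  · intro b hb
    refine ⟨e.symm b, ?_, by simp⟩
    simp only [mem_filter, mem_univ, true_and, Equiv.apply_symm_apply] at hb ⊢
    exact hb

lemma aux_two_pow_le (m : ℕ) (i i' : Fin m) (hne : i ≠ i') :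
    2 ^ m ≤ 4 * (univ.filter (fun v : Fin m → Bool => v i = true ∧ v i' = false)).card := by
  classical
  set E := univ.filter (fun v : Fin m → Bool => v i = true ∧ v i' = false) with hE
  have hcard : (univ : Finset (Fin m → Bool)).card ≤ (E ×ˢ (univ : Finset (Bool × Bool))).card := by
    apply Finset.card_le_card_of_injOn
      (fun v => (Function.update (Function.update v i true) i' false, (v i, v i')))
    · intro v _
      simp only [Finset.mem_coe, Finset.mem_product, mem_univ, and_true, hE, mem_filter, true_and]
      constructor
      · rw [Function.update_of_ne hne, Function.update_self]
      · rw [Function.update_self]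
    · intro u _ v _ h
      simp only [Prod.mk.injEq] at h
      obtain ⟨h1, h2, h3⟩ := h
      funext a
      by_cases hai : a = i
      · subst hai; exact h2
      by_cases hai' : a = i'
      · subst hai'; exact h3
      · have := congrFun h1 a
        rwa [Function.update_of_ne hai', Function.update_of_ne hai,
          Function.update_of_ne hai', Function.update_of_ne hai] at this
  have h1 : (univ : Finset (Fin m → Bool)).card = 2 ^ m := by
    simp [Finset.card_univ, Fintype.card_fun]
  have h2 : (E ×ˢ (univ : Finset (Bool × Bool))).card = E.card * 4 := by
    rw [Finset.card_product]
    simp [Finset.card_univ]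
  omega

lemma aux_sum_weight_pow (N : ℕ) {V : Type*} [Fintype V] [DecidableEq V] (w : V → ℝ) :
    ∑ x : Fin N → V, ∏ p, w (x p) = (∑ v, w v) ^ N := by
  classical
  rw [← Fintype.piFinset_univ, ← Finset.prod_univ_sum (fun _ : Fin N => (univ : Finset V))
    (fun _ v => w v)]
  simp [Finset.prod_const, Finset.card_univ]

lemma aux_badcount_le (m N : ℕ) (i i' : Fin m) (hne : i ≠ i') :
    ((univ.filter (fun x : Fin N → Fin m → Bool =>
        8 * (univ.filter (fun p => x p i = true ∧ x p i' = false)).card < N)).card : ℝ)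
      ≤ (954/1000) ^ N * ((2:ℝ) ^ m) ^ N := by
  classical
  set β : ℝ := ((10:ℝ)/11) ^ 8 with hβdef
  have hβpos : 0 < β := by positivity
  have hβle : β ≤ 1 := by rw [hβdef]; norm_num
  set w : (Fin m → Bool) → ℝ := fun v => if v i = true ∧ v i' = false then β else 1 with hw
  have hprod : ∀ x : Fin N → Fin m → Bool,
      ∏ p, w (x p) = β ^ (univ.filter (fun p => x p i = true ∧ x p i' = false)).card := by
    intro x
    rw [hw]
    rw [Finset.prod_ite (fun _ => β) (fun _ => (1:ℝ)), Finset.prod_const, Finset.prod_const,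
      one_pow, mul_one]
  -- weight sum bound
  set E := univ.filter (fun v : Fin m → Bool => v i = true ∧ v i' = false) with hE
  have hEle : E.card ≤ 2 ^ m := by
    calc E.card ≤ (univ : Finset (Fin m → Bool)).card := Finset.card_filter_le _ _
    _ = 2 ^ m := by simp [Finset.card_univ, Fintype.card_fun]
  have hE4 : 2 ^ m ≤ 4 * E.card := aux_two_pow_le m i i' hne
  have hwsum : ∑ v, w v ≤ (2:ℝ) ^ m * (3/4 + β/4) := by
    have hs : ∑ v, w v = E.card * β + ((univ.filter (fun v : Fin m → Bool =>
        ¬(v i = true ∧ v i' = false))).card : ℝ) := by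
      rw [hw, Finset.sum_ite (fun _ => β) (fun _ => (1:ℝ)), Finset.sum_const, Finset.sum_const]
      simp [hE, nsmul_eq_mul, mul_comm]
    have hsplit : E.card + (univ.filter (fun v : Fin m → Bool =>
        ¬(v i = true ∧ v i' = false))).card = 2 ^ m := by
      rw [hE, Finset.card_filter_add_card_filter_not]
      simp [Finset.card_univ, Fintype.card_fun]
    have h1 : ((E.card : ℝ)) ≤ (2:ℝ) ^ m := by exact_mod_cast hEle
    have h2 : (2:ℝ) ^ m ≤ 4 * E.card := by exact_mod_cast hE4
    have h3 : ((univ.filter (fun v : Fin m → Bool =>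
        ¬(v i = true ∧ v i' = false))).card : ℝ) = (2:ℝ) ^ m - E.card := by
      have hc : ((E.card : ℝ)) + ((univ.filter (fun v : Fin m → Bool =>
          ¬(v i = true ∧ v i' = false))).card : ℝ) = (2:ℝ) ^ m := by exact_mod_cast hsplit
      linarith
    rw [hs, h3]
    nlinarith
  -- per-element lower bound on the weight for bad x
  have hone : ∀ x : Fin N → Fin m → Bool,
      8 * (univ.filter (fun p => x p i = true ∧ x p i' = false)).card < N →
      (1:ℝ) ≤ (11/10) ^ N * β ^ (univ.filter (fun p => x p i = true ∧ x p i' = false)).card := by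
    intro x hx
    set s := (univ.filter (fun p => x p i = true ∧ x p i' = false)).card
    have hβs : β ^ s = (((11:ℝ)/10) ^ (8 * s))⁻¹ := by
      rw [hβdef, ← pow_mul, ← inv_pow]
      norm_num [mul_comm]
    have hpos : (0:ℝ) < (11/10) ^ (8 * s) := by positivity
    have hle : ((11:ℝ)/10) ^ (8 * s) ≤ (11/10) ^ N :=
      pow_le_pow_right₀ (by norm_num) (le_of_lt hx)
    rw [hβs, ← div_eq_mul_inv, le_div_iff₀ hpos, one_mul]
    exact hle
  -- main chain
  have hnonneg : ∀ x : Fin N → Fin m → Bool, (0:ℝ) ≤ (11/10) ^ N * ∏ p, w (x p) := by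
    intro x
    have : (0:ℝ) ≤ ∏ p, w (x p) := by
      rw [hprod]; positivity
    positivity
  calc ((univ.filter (fun x : Fin N → Fin m → Bool =>
        8 * (univ.filter (fun p => x p i = true ∧ x p i' = false)).card < N)).card : ℝ)
      = ∑ x ∈ univ.filter (fun x : Fin N → Fin m → Bool =>
        8 * (univ.filter (fun p => x p i = true ∧ x p i' = false)).card < N), (1:ℝ) := by
        rw [Finset.sum_const]; simp
    _ ≤ ∑ x ∈ univ.filter (fun x : Fin N → Fin m → Bool =>
        8 * (univ.filter (fun p => x p i = true ∧ x p i' = false)).card < N),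
          (11/10) ^ N * ∏ p, w (x p) := by
        apply Finset.sum_le_sum
        intro x hx
        rw [Finset.mem_filter] at hx
        rw [hprod]
        exact hone x hx.2
    _ ≤ ∑ x : Fin N → Fin m → Bool, (11/10) ^ N * ∏ p, w (x p) :=
        Finset.sum_le_sum_of_subset_of_nonneg (Finset.filter_subset _ _)
          (fun x _ _ => hnonneg x)
    _ = (11/10) ^ N * (∑ v, w v) ^ N := by
        rw [← Finset.mul_sum, aux_sum_weight_pow]
    _ ≤ (11/10) ^ N * ((2:ℝ) ^ m * (3/4 + β/4)) ^ N := by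
        apply mul_le_mul_of_nonneg_left _ (by positivity)
        apply pow_le_pow_left₀ _ hwsum
        apply Finset.sum_nonneg
        intro v _
        rw [hw]
        dsimp only
        split <;> [linarith; norm_num]
    _ = ((11/10) * (3/4 + β/4)) ^ N * ((2:ℝ) ^ m) ^ N := by
        rw [← mul_pow, ← mul_pow]; ring_nf
    _ ≤ (954/1000) ^ N * ((2:ℝ) ^ m) ^ N := by
        apply mul_le_mul_of_nonneg_right _ (by positivity)
        apply pow_le_pow_left₀ (by positivity)
        rw [hβdef]; norm_num

lemma aux_exists_code_gen (m N : ℕ)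
    (h : (m : ℝ) * m * (954/1000) ^ N < 1) :
    ∃ x : Fin N → Fin m → Bool, ∀ i i' : Fin m, i ≠ i' →
      N ≤ 8 * (univ.filter (fun p => x p i = true ∧ x p i' = false)).card := by
  classical
  by_contra hcon
  push_neg at hcon
  have hsub : (univ : Finset (Fin N → Fin m → Bool)) ⊆
      (univ.offDiag).biUnion (fun q : Fin m × Fin m =>
        univ.filter (fun x : Fin N → Fin m → Bool =>
          8 * (univ.filter (fun p => x p q.1 = true ∧ x p q.2 = false)).card < N)) := by
    intro x _
    obtain ⟨i, i', hne, hbad⟩ := hcon x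
    exact Finset.mem_biUnion.mpr ⟨(i, i'), Finset.mem_offDiag.mpr ⟨mem_univ _, mem_univ _, hne⟩,
      Finset.mem_filter.mpr ⟨mem_univ _, hbad⟩⟩
  have hcardle : (univ : Finset (Fin N → Fin m → Bool)).card ≤
      ∑ q ∈ (univ : Finset (Fin m)).offDiag,
        (univ.filter (fun x : Fin N → Fin m → Bool =>
          8 * (univ.filter (fun p => x p q.1 = true ∧ x p q.2 = false)).card < N)).card :=
    le_trans (Finset.card_le_card hsub) (Finset.card_biUnion_le)
  have htot : ((univ : Finset (Fin N → Fin m → Bool)).card : ℝ) = ((2:ℝ) ^ m) ^ N := by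
    rw [Finset.card_univ, Fintype.card_fun]
    push_cast [Fintype.card_fun]
    norm_num
  have hsum : (((univ : Finset (Fin N → Fin m → Bool)).card : ℝ)) ≤
      ((m : ℝ) * m) * ((954/1000) ^ N * ((2:ℝ) ^ m) ^ N) := by
    calc (((univ : Finset (Fin N → Fin m → Bool)).card : ℝ))
        ≤ ∑ q ∈ (univ : Finset (Fin m)).offDiag,
          (((univ.filter (fun x : Fin N → Fin m → Bool =>
            8 * (univ.filter (fun p => x p q.1 = true ∧ x p q.2 = false)).card < N)).card : ℝ)) := by
          exact_mod_cast hcardle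
      _ ≤ ∑ q ∈ (univ : Finset (Fin m)).offDiag,
            ((954/1000:ℝ) ^ N * ((2:ℝ) ^ m) ^ N) := by
          apply Finset.sum_le_sum
          intro q hq
          have hne : q.1 ≠ q.2 := (Finset.mem_offDiag.mp hq).2.2
          exact aux_badcount_le m N q.1 q.2 hne
      _ = ((univ : Finset (Fin m)).offDiag.card : ℝ) *
            ((954/1000:ℝ) ^ N * ((2:ℝ) ^ m) ^ N) := by
          rw [Finset.sum_const, nsmul_eq_mul]
      _ ≤ ((m : ℝ) * m) * ((954/1000) ^ N * ((2:ℝ) ^ m) ^ N) := by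
          have hnn : (univ : Finset (Fin m)).offDiag.card ≤ m * m := by
            refine le_trans (le_of_eq (Finset.offDiag_card _)) ?_
            simp only [Finset.card_univ, Fintype.card_fin]
            exact Nat.sub_le _ _
          have hcard : (((univ : Finset (Fin m)).offDiag.card : ℝ)) ≤ (m : ℝ) * m := by
            exact_mod_cast hnn
          exact mul_le_mul_of_nonneg_right hcard (by positivity)
  rw [htot] at hsum
  have hpos : (0:ℝ) < ((2:ℝ) ^ m) ^ N := by positivity
  nlinarith

lemma aux_q_pow_lt (m : ℕ) (hm : 2 ≤ m) :
    (m : ℝ) * m * (954/1000) ^ (31 * (Nat.log 2 m + 1)) < 1 := by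
  set L := Nat.log 2 m
  have h31 : ((954:ℝ)/1000) ^ 31 ≤ 1/4 := by norm_num
  have hlt : m < 2 ^ (L + 1) := Nat.lt_pow_succ_log_self (by norm_num) m
  have hmR : (m:ℝ) < 2 ^ (L+1) := by exact_mod_cast hlt
  have h1 : ((954:ℝ)/1000) ^ (31 * (L+1)) ≤ (1/4) ^ (L+1) := by
    rw [pow_mul]
    exact pow_le_pow_left₀ (by positivity) h31 _
  have hm0 : (0:ℝ) ≤ (m:ℝ) := by positivity
  have hmm : (m:ℝ) * m < ((2:ℝ)^(L+1)) * (2:ℝ)^(L+1) := by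
    apply mul_lt_mul'' hmR hmR hm0 hm0
  have h4 : ((1:ℝ)/4) ^ (L+1) = (((2:ℝ)^(L+1)) * (2:ℝ)^(L+1))⁻¹ := by
    rw [div_pow, one_pow, one_div, ← mul_pow]
    norm_num
  calc (m : ℝ) * m * (954/1000) ^ (31 * (L + 1))
      ≤ (m : ℝ) * m * (1/4) ^ (L+1) := by
        apply mul_le_mul_of_nonneg_left h1 (by positivity)
    _ < (((2:ℝ)^(L+1)) * (2:ℝ)^(L+1)) * (((2:ℝ)^(L+1)) * (2:ℝ)^(L+1))⁻¹ := by
        rw [h4]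
        apply mul_lt_mul_of_pos_right hmm (by positivity)
    _ = 1 := by
        apply mul_inv_cancel₀
        positivity

lemma aux_N_le_log (m r : ℕ) (hm : 2 ≤ m) (hr : 1 ≤ r) :
    ((r * (31 * (Nat.log 2 m + 1)) : ℕ) : ℝ) ≤ 100 * r * Real.log (2 * m * r) := by
  set L := Nat.log 2 m
  set x := Real.log (2 * (m:ℝ) * r) with hx
  have hm0 : (1:ℝ) ≤ (m:ℝ) := by exact_mod_cast le_trans (by norm_num) hm
  have hr0 : (1:ℝ) ≤ (r:ℝ) := by exact_mod_cast hr
  have h2L : ((2:ℝ))^L ≤ (m:ℝ) := by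
    exact_mod_cast Nat.pow_log_le_self 2 (by omega)
  have hLx : (L:ℝ) * Real.log 2 ≤ Real.log m := by
    rw [← Real.log_pow]
    exact Real.log_le_log (by positivity) h2L
  have hm2 : (2:ℝ) ≤ (m:ℝ) := by exact_mod_cast hm
  have hmr1 : (2:ℝ) * 1 ≤ (m:ℝ) * r := by
    exact mul_le_mul hm2 hr0 zero_le_one (by positivity)
  have hmx : Real.log m ≤ x := by
    apply Real.log_le_log (by positivity)
    nlinarith
  have hLx' : (L:ℝ) * Real.log 2 ≤ x := le_trans hLx hmx
  have hl2 : (0.6931:ℝ) < Real.log 2 := by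
    have := Real.log_two_gt_d9; linarith
  have hl2' : Real.log 2 < (0.6932:ℝ) := by
    have := Real.log_two_lt_d9; linarith
  have h4x : 2 * Real.log 2 ≤ x := by
    have h4 : Real.log ((2:ℝ)^2) ≤ x := by
      apply Real.log_le_log (by positivity)
      nlinarith
    rwa [Real.log_pow, Nat.cast_ofNat] at h4
  have hL0 : (0:ℝ) ≤ (L:ℝ) := by positivity
  have hgoal : 31 * (L:ℝ) + 31 ≤ 100 * x := by
    nlinarith [mul_le_mul_of_nonneg_left hLx' (by norm_num : (0:ℝ) ≤ 100)]
  push_cast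
  nlinarith [mul_le_mul_of_nonneg_left hgoal (le_trans (by norm_num) hr0)]

/-- The coordinate `k·m + i` (in the first half) of `Fin (2·m·r)`. -/
def idxL (m r : ℕ) (k : Fin r) (i : Fin m) : Fin (2 * m * r) :=
  ⟨(k : ℕ) * m + (i : ℕ), by
    have h1 : ((k : ℕ) + 1) * m ≤ r * m := Nat.mul_le_mul (Nat.succ_le_of_lt k.isLt) (le_refl m)
    have h2 : (i : ℕ) < m := i.isLt
    nlinarith⟩

/-- The coordinate `m·r + l·m + j` (in the second half) of `Fin (2·m·r)`. -/
def idxR (m r : ℕ) (l : Fin r) (j : Fin m) : Fin (2 * m * r) :=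
  ⟨m * r + (l : ℕ) * m + (j : ℕ), by
    have h1 : ((l : ℕ) + 1) * m ≤ r * m := Nat.mul_le_mul (Nat.succ_le_of_lt l.isLt) (le_refl m)
    have h2 : (j : ℕ) < m := j.isLt
    nlinarith⟩

/-- The row `v_{k,S}` associated to a block `k ∈ Fin r`, a subset `S ⊆ Fin m`, and a family
of permutations `π k l` of `Fin m`: on the first half, coordinate `k·m + i` is true iff
`i ∈ S` (and coordinates outside block `k` are false); on the second half, coordinate
`m·r + l·m + j` is true iff `(π k l)⁻¹ j ∉ S`. -/
def vrow2 (m r : ℕ) (hm : 0 < m) (π : Fin r → Fin r → Equiv.Perm (Fin m)) (k : Fin r)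
    (S : Finset (Fin m)) : Fin (2 * m * r) → Bool :=
  fun x =>
    if h : (x : ℕ) < m * r then
      decide ((x : ℕ) / m = (k : ℕ)) &&
        decide ((⟨(x : ℕ) % m, Nat.mod_lt _ hm⟩ : Fin m) ∈ S)
    else
      decide
        ((π k ⟨((x : ℕ) - m * r) / m, by
            have hx := x.isLt
            have h2 : 2 * m * r = m * r + m * r := by ring
            have h3 : r * m = m * r := Nat.mul_comm r m
            exact (Nat.div_lt_iff_lt_mul hm).mpr (by omega)⟩).symm
          ⟨((x : ℕ) - m * r) % m, Nat.mod_lt _ hm⟩ ∉ S)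


lemma aux_vrow2_idxL (m r : ℕ) (hm : 0 < m) (π : Fin r → Fin r → Equiv.Perm (Fin m))
    (k' k : Fin r) (S : Finset (Fin m)) (i : Fin m) :
    vrow2 m r hm π k' S (idxL m r k i) = true ↔ (k' = k ∧ i ∈ S) := by
  have hval : ((idxL m r k i : Fin (2*m*r)) : ℕ) = (k : ℕ) * m + (i : ℕ) := rfl
  have hxlt : ((idxL m r k i : Fin (2*m*r)) : ℕ) < m * r := by
    rw [hval]
    have h1 : ((k : ℕ) + 1) * m ≤ r * m := mul_le_mul_left (Nat.succ_le_of_lt k.isLt) m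
    have h2 : (i : ℕ) < m := i.isLt
    nlinarith
  rw [vrow2, dif_pos hxlt]
  have hdiv : ((k : ℕ) * m + (i : ℕ)) / m = (k : ℕ) := by
    rw [mul_comm, Nat.mul_add_div hm, Nat.div_eq_of_lt i.isLt, add_zero]
  have hmod : ((k : ℕ) * m + (i : ℕ)) % m = (i : ℕ) := by
    rw [mul_comm, Nat.mul_add_mod, Nat.mod_eq_of_lt i.isLt]
  have hfin : (⟨((idxL m r k i : Fin (2*m*r)) : ℕ) % m, Nat.mod_lt _ hm⟩ : Fin m) = i := by
    apply Fin.ext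
    simp only [hval, hmod]
  rw [hfin]
  simp only [Bool.and_eq_true, decide_eq_true_eq, hval, hdiv]
  constructor
  · rintro ⟨h1, h2⟩; exact ⟨Fin.ext h1.symm ▸ rfl, h2⟩
  · rintro ⟨h1, h2⟩; exact ⟨congrArg Fin.val h1.symm, h2⟩


lemma aux_vrow2_idxR (m r : ℕ) (hm : 0 < m) (π : Fin r → Fin r → Equiv.Perm (Fin m))
    (k' l : Fin r) (S : Finset (Fin m)) (j : Fin m) :
    vrow2 m r hm π k' S (idxR m r l j) = true ↔ (π k' l).symm j ∉ S := by
  have hval : ((idxR m r l j : Fin (2*m*r)) : ℕ) = m * r + (l : ℕ) * m + (j : ℕ) := rfl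
  have hxge : ¬ ((idxR m r l j : Fin (2*m*r)) : ℕ) < m * r := by
    rw [hval]
    have := Nat.le_add_right (m*r) ((l : ℕ) * m)
    have := Nat.le_add_right (m*r + (l : ℕ) * m) (j : ℕ)
    omega
  rw [vrow2, dif_neg hxge]
  have hsub : ((idxR m r l j : Fin (2*m*r)) : ℕ) - m * r = (l : ℕ) * m + (j : ℕ) := by
    rw [hval, add_assoc, Nat.add_sub_cancel_left]
  have hdiv : ((l : ℕ) * m + (j : ℕ)) / m = (l : ℕ) := by
    rw [mul_comm, Nat.mul_add_div hm, Nat.div_eq_of_lt j.isLt, add_zero]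
  have hmod : ((l : ℕ) * m + (j : ℕ)) % m = (j : ℕ) := by
    rw [mul_comm, Nat.mul_add_mod, Nat.mod_eq_of_lt j.isLt]
  have hA : (⟨(((idxR m r l j : Fin (2*m*r)) : ℕ) - m * r) / m, by
      have hx := (idxR m r l j : Fin (2*m*r)).isLt
      have h2 : 2 * m * r = m * r + m * r := by ring
      have h3 : r * m = m * r := Nat.mul_comm r m
      exact (Nat.div_lt_iff_lt_mul hm).mpr (by omega)⟩ : Fin r) = l := by
    apply Fin.ext
    simp only [hsub, hdiv]
  have hB : (⟨(((idxR m r l j : Fin (2*m*r)) : ℕ) - m * r) % m, Nat.mod_lt _ hm⟩ : Fin m) = j := by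
    apply Fin.ext
    simp only [hsub, hmod]
  rw [hA, hB, decide_eq_true_eq]



/-- There is a constant `C > 0` such that for all `m ≥ 2`, `r ≥ 1` with `d = 2·m·r`, there is
a number of rows `n ≤ C · r · log d` and, for each family `π` of permutations of `Fin m`
indexed by `Fin r × Fin r`, a database `D` with `n` rows, each of the form `v_{k,S}`, whose
query frequencies `f_{T_{k,l}(i,j)}` are `0` when `j = π k l i` and at least `1/(8r)` when
`j ≠ π k l i`; moreover the map from families to databases is injective. -/
theorem encode_permutation_family_in_database :
    ∃ C : ℝ, C > 0 ∧
      ∀ m r : ℕ, 2 ≤ m → 1 ≤ r →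
        ∃ n : ℕ, (n : ℝ) ≤ C * r * Real.log (2 * m * r) ∧
          ∀ hm : 0 < m,
          ∃ Dmap : (Fin r → Fin r → Equiv.Perm (Fin m)) →
              (Fin n → Fin (2 * m * r) → Bool),
            Function.Injective Dmap ∧
            ∀ π : Fin r → Fin r → Equiv.Perm (Fin m),
              (∀ t : Fin n, ∃ (k : Fin r) (S : Finset (Fin m)),
                Dmap π t = vrow2 m r hm π k S) ∧
              ∀ (k l : Fin r) (i j : Fin m),
                (j = π k l i → freq (Dmap π) {idxL m r k i, idxR m r l j} = 0) ∧
                (j ≠ π k l i →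
                  freq (Dmap π) {idxL m r k i, idxR m r l j} ≥ 1 / (8 * r)) := by
  classical
  refine ⟨100, by norm_num, ?_⟩
  intro m r hm2 hr1
  set N := 31 * (Nat.log 2 m + 1) with hN
  have hNpos : 0 < N := by omega
  refine ⟨r * N, aux_N_le_log m r hm2 hr1, ?_⟩
  intro hm
  obtain ⟨x, hx⟩ := aux_exists_code_gen m N (aux_q_pow_lt m hm2)
  set e : Fin r × Fin N ≃ Fin (r * N) := finProdFinEquiv with he
  set Dmap : (Fin r → Fin r → Equiv.Perm (Fin m)) → Fin (r * N) → Fin (2 * m * r) → Bool :=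
    fun π t => vrow2 m r hm π (e.symm t).1
      (univ.filter (fun a => x (e.symm t).2 a = true)) with hD
  -- counting the rows satisfying a query
  have key : ∀ (π : Fin r → Fin r → Equiv.Perm (Fin m)) (k l : Fin r) (i j : Fin m),
      (univ.filter (fun t : Fin (r * N) =>
        ∀ a ∈ ({idxL m r k i, idxR m r l j} : Finset (Fin (2 * m * r))),
          Dmap π t a = true)).card
      = (univ.filter (fun p : Fin N =>
          x p i = true ∧ x p ((π k l).symm j) = false)).card := by
    intro π k l i j
    rw [← aux_card_filter_equiv e (fun t : Fin (r * N) =>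
      ∀ a ∈ ({idxL m r k i, idxR m r l j} : Finset (Fin (2 * m * r))), Dmap π t a = true)]
    have hset : (univ.filter fun q : Fin r × Fin N =>
        ∀ a ∈ ({idxL m r k i, idxR m r l j} : Finset (Fin (2 * m * r))),
          Dmap π (e q) a = true)
        = ({k} : Finset (Fin r)) ×ˢ (univ.filter (fun p : Fin N =>
            x p i = true ∧ x p ((π k l).symm j) = false)) := by
      ext q
      obtain ⟨k1, p⟩ := q
      simp only [mem_filter, mem_univ, true_and, Finset.mem_product, Finset.mem_singleton,
        Finset.mem_insert, forall_eq_or_imp, forall_eq]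
      rw [hD]
      simp only [Equiv.symm_apply_apply]
      rw [aux_vrow2_idxL m r hm π k1 k _ i, aux_vrow2_idxR m r hm π k1 l _ j]
      simp only [Finset.mem_filter, Finset.mem_univ, true_and]
      constructor
      · rintro ⟨⟨hk, hi⟩, hj⟩
        subst hk
        exact ⟨rfl, hi, by simpa using hj⟩
      · rintro ⟨hk, hi, hj⟩
        subst hk
        exact ⟨⟨rfl, hi⟩, by simpa using hj⟩
    rw [hset, Finset.card_product, Finset.card_singleton, one_mul]
  -- freq formula
  have hfreq : ∀ (π : Fin r → Fin r → Equiv.Perm (Fin m)) (k l : Fin r) (i j : Fin m),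
      freq (Dmap π) {idxL m r k i, idxR m r l j}
        = ((univ.filter (fun p : Fin N =>
            x p i = true ∧ x p ((π k l).symm j) = false)).card : ℝ) / (r * N) := by
    intro π k l i j
    rw [freq, key]
    push_cast
    ring
  -- zero case
  have hzero : ∀ (π : Fin r → Fin r → Equiv.Perm (Fin m)) (k l : Fin r) (i j : Fin m),
      j = π k l i → freq (Dmap π) {idxL m r k i, idxR m r l j} = 0 := by
    intro π k l i j hj
    rw [hfreq]
    have : (univ.filter (fun p : Fin N =>
        x p i = true ∧ x p ((π k l).symm j) = false)) = ∅ := by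
      apply Finset.filter_false_of_mem
      intro p _
      rw [hj, Equiv.symm_apply_apply]
      rintro ⟨h1, h2⟩
      rw [h1] at h2
      simp at h2
    rw [this]
    simp
  -- positive case
  have hpos : ∀ (π : Fin r → Fin r → Equiv.Perm (Fin m)) (k l : Fin r) (i j : Fin m),
      j ≠ π k l i → freq (Dmap π) {idxL m r k i, idxR m r l j} ≥ 1 / (8 * r) := by
    intro π k l i j hj
    rw [hfreq]
    have hne : i ≠ (π k l).symm j := by
      intro h
      exact hj (by rw [h, Equiv.apply_symm_apply])
    have hcard := hx i ((π k l).symm j) hne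
    have hc : (N : ℝ) ≤ 8 * ((univ.filter (fun p : Fin N =>
        x p i = true ∧ x p ((π k l).symm j) = false)).card : ℝ) := by
      exact_mod_cast hcard
    have hrpos : (0:ℝ) < (r : ℝ) := by exact_mod_cast hr1
    have hNR : (0:ℝ) < (N : ℝ) := by exact_mod_cast hNpos
    rw [ge_iff_le, div_le_div_iff₀ (by positivity) (by positivity)]
    nlinarith
  -- injectivity
  have hinj : Function.Injective Dmap := by
    intro π π' hEq
    funext k l
    apply Equiv.ext
    intro i
    by_contra hne
    have h0 : freq (Dmap π) {idxL m r k i, idxR m r l (π k l i)} = 0 :=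
      hzero π k l i (π k l i) rfl
    have h1 : freq (Dmap π') {idxL m r k i, idxR m r l (π k l i)} ≥ 1 / (8 * r) :=
      hpos π' k l i (π k l i) (fun h => hne h)
    rw [hEq] at h0
    rw [h0] at h1
    have hrpos : (0:ℝ) < (r : ℝ) := by exact_mod_cast hr1
    have : (0:ℝ) < 1 / (8 * r) := by positivity
    linarith
  refine ⟨Dmap, hinj, ?_⟩
  intro π
  refine ⟨fun t => ⟨(e.symm t).1, univ.filter (fun a => x (e.symm t).2 a = true), rfl⟩, ?_⟩
  intro k l i j
  exact ⟨hzero π k l i j, hpos π k l i j⟩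
end
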